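/- Let n be a natural number. Let p : (Fin n → ℝ) → ℝ be twice continuously differentiable with p(z) > 0 for all z, let D : (Fin n → ℝ) → Matrix (Fin n) (Fin n) ℝ have twice continuously differentiable entries, and let h : (Fin n → ℝ) → (Fin n → ℝ) be continuously differentiable. Write ∂_i for the partial derivative in the i-th coordinate, define the divergence of a vector field v by ∇·v = Σ_i ∂_i v_i, the row-wise divergence of the matrix field D by (∇·D)_i = Σ_j ∂_j D_{ij}, and (D ∇log p)_i = Σ_j D_{ij} (∂_j p / p). Define the modified drift h̃ := h − (1/2) D ∇log p − (1/2) ∇·D. Then the following identity holds pointwise: ∇·(h̃ · p) = ∇·(h · p) − (1/2) Σ_{i,j} ∂_i ∂_j (D_{ij} · p). -/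

import Mathlib

/-- The partial derivative `∂_i f` of a scalar function `f` on `Fin n → ℝ`,
in the `i`-th coordinate direction. -/
noncomputable def pd {n : ℕ} (i : Fin n) (f : (Fin n → ℝ) → ℝ) (z : Fin n → ℝ) : ℝ :=
  fderiv ℝ f z (Pi.single i 1)

/-- The modified (probability-flow) drift
`h̃ = h − (1/2) D ∇log p − (1/2) ∇·D`, where
`(D ∇log p)_i = ∑_j D_{ij} (∂_j p / p)` and `(∇·D)_i = ∑_j ∂_j D_{ij}`. -/
noncomputable def modifiedDrift {n : ℕ}
    (h : (Fin n → ℝ) → (Fin n → ℝ))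
    (D : (Fin n → ℝ) → Matrix (Fin n) (Fin n) ℝ)
    (p : (Fin n → ℝ) → ℝ) (z : Fin n → ℝ) (i : Fin n) : ℝ :=
  h z i - (1 / 2) * (∑ j, D z i j * (pd j p z / p z))
    - (1 / 2) * ∑ j, pd j (fun w => D w i j) z

lemma pd_sub {n : ℕ} {i : Fin n} {f g : (Fin n → ℝ) → ℝ} {z : Fin n → ℝ}
    (hf : DifferentiableAt ℝ f z) (hg : DifferentiableAt ℝ g z) :
    pd i (fun w => f w - g w) z = pd i f z - pd i g z := by
  unfold pd; rw [fderiv_fun_sub hf hg]; simp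

lemma pd_const_mul {n : ℕ} {i : Fin n} {g : (Fin n → ℝ) → ℝ} {z : Fin n → ℝ}
    (c : ℝ) (hg : DifferentiableAt ℝ g z) :
    pd i (fun w => c * g w) z = c * pd i g z := by
  unfold pd; rw [fderiv_const_mul hg c]; simp

lemma pd_sum {n m : ℕ} {i : Fin n} {f : Fin m → (Fin n → ℝ) → ℝ} {z : Fin n → ℝ}
    (hf : ∀ j, DifferentiableAt ℝ (f j) z) :
    pd i (fun w => ∑ j, f j w) z = ∑ j, pd i (f j) z := by
  unfold pd; rw [fderiv_fun_sum (fun j _ => hf j)]; simp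

/-- Analytic core of the SDE / probability-flow-ODE equivalence:
`∇·(h̃ p) = ∇·(h p) − (1/2) ∑_{i,j} ∂_i ∂_j (D_{ij} p)` pointwise, where
`h̃ = h − (1/2) D ∇log p − (1/2) ∇·D`. -/
theorem div_modifiedDrift_eq
    (n : ℕ) (p : (Fin n → ℝ) → ℝ) (D : (Fin n → ℝ) → Matrix (Fin n) (Fin n) ℝ)
    (h : (Fin n → ℝ) → (Fin n → ℝ))
    (hp : ContDiff ℝ 2 p) (hppos : ∀ z, 0 < p z)
    (hD : ∀ i j : Fin n, ContDiff ℝ 2 fun z => D z i j)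
    (hh : ContDiff ℝ 1 h) :
    ∀ z : Fin n → ℝ,
      (∑ i, pd i (fun w => p w * modifiedDrift h D p w i) z) =
        (∑ i, pd i (fun w => p w * h w i) z) -
          (1 / 2) * ∑ i, ∑ j, pd i (fun w => pd j (fun u => D u i j * p u) w) z := by
  intro z
  have hpd : Differentiable ℝ p := hp.differentiable two_ne_zero
  have hDd : ∀ i j, Differentiable ℝ (fun w => D w i j) :=
    fun i j => (hD i j).differentiable two_ne_zero
  have hhd : ∀ i, Differentiable ℝ (fun w => h w i) :=
    fun i => (contDiff_pi.mp hh i).differentiable one_ne_zero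
  have hDp2 : ∀ i j, ContDiff ℝ 2 (fun u => D u i j * p u) := fun i j => (hD i j).mul hp
  have hpdDiff : ∀ i j, Differentiable ℝ (fun w => pd j (fun u => D u i j * p u) w) := by
    intro i j
    have h1 : ContDiff ℝ 1 (fun w => fderiv ℝ (fun u => D u i j * p u) w) :=
      (hDp2 i j).fderiv_right (by norm_num)
    exact (h1.clm_apply contDiff_const).differentiable one_ne_zero
  -- pointwise rewriting of p * modifiedDrift
  have key : ∀ i, (fun w => p w * modifiedDrift h D p w i) =
      (fun w => p w * h w i - (1/2) * ∑ j, pd j (fun u => D u i j * p u) w) := by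
    intro i
    funext w
    have hpne : p w ≠ 0 := (hppos w).ne'
    have hprod : ∀ j, pd j (fun u => D u i j * p u) w =
        pd j (fun u => D u i j) w * p w + D w i j * pd j p w := by
      intro j
      unfold pd
      rw [fderiv_fun_mul ((hDd i j) w) (hpd w)]
      simp only [ContinuousLinearMap.add_apply, ContinuousLinearMap.smul_apply, smul_eq_mul]
      ring
    have e2 : ∑ j, pd j (fun u => D u i j * p u) w =
        (∑ j, pd j (fun u => D u i j) w) * p w + ∑ j, D w i j * pd j p w := by
      rw [Finset.sum_mul, ← Finset.sum_add_distrib]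
      exact Finset.sum_congr rfl fun j _ => hprod j
    have e1 : ∑ j, D w i j * (pd j p w / p w) = (∑ j, D w i j * pd j p w) / p w := by
      rw [Finset.sum_div]; exact Finset.sum_congr rfl fun j _ => (mul_div_assoc _ _ _).symm
    simp only [modifiedDrift]
    rw [e2, e1]
    field_simp
    ring
  -- now differentiate term by term
  have step : ∀ i, pd i (fun w => p w * modifiedDrift h D p w i) z =
      pd i (fun w => p w * h w i) z -
        (1/2) * ∑ j, pd i (fun w => pd j (fun u => D u i j * p u) w) z := by
    intro i
    rw [key i]
    have d1 : DifferentiableAt ℝ (fun w => p w * h w i) z := (hpd z).mul ((hhd i) z)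
    have d2 : DifferentiableAt ℝ
        (fun w => ∑ j, pd j (fun u => D u i j * p u) w) z :=
      (Differentiable.fun_sum (fun j _ => hpdDiff i j)) z
    rw [pd_sub d1 (d2.const_mul _), pd_const_mul _ d2,
      pd_sum (fun j => (hpdDiff i j) z)]
  rw [Finset.sum_congr rfl fun i _ => step i, Finset.sum_sub_distrib, ← Finset.mul_sum]
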